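/- Let λ ∈ (0,1) and let K, L ⊂ ℝ be non-empty bounded sets. Then G_1((1-λ)K + λL + (-1,1)) ≥ (1-λ)G_1(K) + λG_1(L). -/

import Mathlib

open Set
open scoped Pointwise

/-- The lattice point enumerator on `ℝ`. -/
noncomputable def latticeEnum1 (M : Set ℝ) : ℕ := (M ∩ {x : ℝ | ∃ z : ℤ, x = z}).ncard

lemma latticeEnum1_eq (M : Set ℝ) : latticeEnum1 M = {z : ℤ | (z:ℝ) ∈ M}.ncard := by
  unfold latticeEnum1
  have h : M ∩ {x : ℝ | ∃ z : ℤ, x = z} = (fun z : ℤ => (z:ℝ)) '' {z : ℤ | (z:ℝ) ∈ M} := by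
    ext x
    simp only [Set.mem_inter_iff, Set.mem_setOf_eq, Set.mem_image]
    constructor
    · rintro ⟨hx, z, rfl⟩; exact ⟨z, hx, rfl⟩
    · rintro ⟨z, hz, rfl⟩; exact ⟨hz, z, rfl⟩
  rw [h, Set.ncard_image_of_injective _ (fun a b hab => by exact_mod_cast hab)]

lemma finite_int (S : Set ℝ) (hS : Bornology.IsBounded S) : {z : ℤ | (z:ℝ) ∈ S}.Finite := by
  obtain ⟨r, hr⟩ := hS.subset_closedBall 0
  apply Set.Finite.subset (Set.finite_Icc (-⌈r⌉) ⌈r⌉)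
  intro z hz
  have h1 := hr hz
  rw [Metric.mem_closedBall, Real.dist_eq, sub_zero, abs_le] at h1
  have hc := Int.le_ceil r
  simp only [Set.mem_Icc]
  constructor
  · exact_mod_cast (by linarith : -(⌈r⌉:ℝ) ≤ (z:ℝ))
  · exact_mod_cast (by linarith : (z:ℝ) ≤ (⌈r⌉:ℝ))

lemma enum_exists (s : Finset ℤ) (m : ℕ) (hm : s.card = m) (h1m : 1 ≤ m) :
    ∃ a : ℕ → ℤ, (∀ k, a k ∈ s) ∧ (∀ k, k + 1 ≤ m - 1 → a k + 1 ≤ a (k+1)) ∧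
      (∀ k, m - 1 ≤ k → a k = a (m-1)) := by
  refine ⟨fun k => s.orderEmbOfFin hm ⟨min k (m-1), by omega⟩,
    fun k => Finset.orderEmbOfFin_mem s hm _, ?_, ?_⟩
  · intro k hk
    have hlt : (s.orderEmbOfFin hm) ⟨min k (m-1), by omega⟩ <
        (s.orderEmbOfFin hm) ⟨min (k+1) (m-1), by omega⟩ := by
      apply (s.orderEmbOfFin hm).strictMono
      rw [Fin.mk_lt_mk]
      omega
    exact Int.add_one_le_iff.mpr hlt
  · intro k hk
    have hmin : min k (m-1) = min (m-1) (m-1) := by omega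
    simp only [hmin]


lemma core (p : ℕ → ℝ) (w : ℕ → ℝ) (hw0 : ∀ k, 0 ≤ w k) (hw1 : ∀ k, w k ≤ 1) :
    ∀ N : ℕ, (∀ k < N, w k ≤ p (k+1) - p k) →
    ∃ T : Finset ℤ,
      (∀ z ∈ T, ∃ k ≤ N, |(z:ℝ) - p k| < 1) ∧
      (∀ z ∈ T, z ≤ ⌈p N⌉) ∧
      (∑ k ∈ Finset.range N, w k) + 1 + ((⌈p N⌉ : ℝ) - p N) ≤ (T.card : ℝ) := by
  intro N
  induction N with
  | zero =>
    intro _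
    by_cases h : (⌈p 0⌉ : ℝ) = p 0
    · refine ⟨{⌈p 0⌉}, ?_, ?_, ?_⟩
      · intro z hz
        simp only [Finset.mem_singleton] at hz
        exact ⟨0, le_refl _, by rw [hz, h]; simpa using one_pos⟩
      · intro z hz; simp only [Finset.mem_singleton] at hz; omega
      · simp [h]
    · refine ⟨{⌈p 0⌉ - 1, ⌈p 0⌉}, ?_, ?_, ?_⟩
      · intro z hz
        have h1 := Int.le_ceil (p 0)
        have h2 := Int.ceil_lt_add_one (p 0)
        have h1' : p 0 < (⌈p 0⌉ : ℝ) := lt_of_le_of_ne h1 (Ne.symm h)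
        simp only [Finset.mem_insert, Finset.mem_singleton] at hz
        rcases hz with rfl | rfl
        · exact ⟨0, le_refl _, by rw [abs_lt]; push_cast; constructor <;> linarith⟩
        · exact ⟨0, le_refl _, by rw [abs_lt]; constructor <;> linarith⟩
      · intro z hz; simp only [Finset.mem_insert, Finset.mem_singleton] at hz; omega
      · have h2 := Int.ceil_lt_add_one (p 0)
        have hcard : ({⌈p 0⌉ - 1, ⌈p 0⌉} : Finset ℤ).card = 2 := by
          rw [Finset.card_insert_of_notMem (by simp), Finset.card_singleton]
        rw [hcard]; simp; linarith
  | succ N ih =>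
    intro hstep
    obtain ⟨T, hTmem, hTle, hTcard⟩ := ih (fun k hk => hstep k (by omega))
    have hd : w N ≤ p (N+1) - p N := hstep N (by omega)
    have hmono : p N ≤ p (N+1) := by have := hw0 N; linarith
    have hcc' : ⌈p N⌉ ≤ ⌈p (N+1)⌉ := Int.ceil_le_ceil hmono
    have hle1 := Int.le_ceil (p N)
    have hlt1 := Int.ceil_lt_add_one (p N)
    have hle2 := Int.le_ceil (p (N+1))
    have hlt2 := Int.ceil_lt_add_one (p (N+1))
    by_cases hcase : p (N+1) - 1 ≤ (⌈p N⌉ : ℝ)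
    · -- contiguous case
      refine ⟨T ∪ Finset.Ioc ⌈p N⌉ ⌈p (N+1)⌉, ?_, ?_, ?_⟩
      · intro z hz
        rcases Finset.mem_union.1 hz with hz | hz
        · obtain ⟨k, hk, h⟩ := hTmem z hz; exact ⟨k, by omega, h⟩
        · rw [Finset.mem_Ioc] at hz
          refine ⟨N+1, le_refl _, ?_⟩
          rw [abs_lt]
          have hz1 : (⌈p N⌉ : ℝ) + 1 ≤ (z : ℝ) := by exact_mod_cast Int.add_one_le_iff.2 hz.1
          have hz2 : (z : ℝ) ≤ (⌈p (N+1)⌉ : ℝ) := by exact_mod_cast hz.2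
          constructor <;> linarith
      · intro z hz
        rcases Finset.mem_union.1 hz with hz | hz
        · exact le_trans (hTle z hz) hcc'
        · exact (Finset.mem_Ioc.1 hz).2
      · have hdisj : Disjoint T (Finset.Ioc ⌈p N⌉ ⌈p (N+1)⌉) := by
          rw [Finset.disjoint_left]
          intro z hz hz'
          have := hTle z hz
          have := (Finset.mem_Ioc.1 hz').1
          omega
        rw [Finset.card_union_of_disjoint hdisj, Int.card_Ioc]
        have htn : (((⌈p (N+1)⌉ - ⌈p N⌉).toNat : ℤ) : ℝ) = (⌈p (N+1)⌉ : ℝ) - (⌈p N⌉ : ℝ) := by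
          rw [Int.toNat_of_nonneg (by omega : (0:ℤ) ≤ ⌈p (N+1)⌉ - ⌈p N⌉)]; push_cast; ring
        push_cast at htn ⊢
        rw [Finset.sum_range_succ, htn]
        linarith
    · push_neg at hcase
      have hgap : (⌈p N⌉ : ℝ) + 1 < (⌈p (N+1)⌉ : ℝ) := by linarith
      have hnew : ⌈p N⌉ + 1 < ⌈p (N+1)⌉ := by exact_mod_cast hgap
      by_cases h2 : (⌈p (N+1)⌉ : ℝ) = p (N+1)
      · refine ⟨T ∪ {⌈p (N+1)⌉}, ?_, ?_, ?_⟩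
        · intro z hz
          rcases Finset.mem_union.1 hz with hz | hz
          · obtain ⟨k, hk, h⟩ := hTmem z hz; exact ⟨k, by omega, h⟩
          · simp only [Finset.mem_singleton] at hz
            exact ⟨N+1, le_refl _, by rw [hz, h2]; simpa using one_pos⟩
        · intro z hz
          rcases Finset.mem_union.1 hz with hz | hz
          · exact le_trans (hTle z hz) hcc'
          · simp only [Finset.mem_singleton] at hz; omega
        · have hdisj : Disjoint T ({⌈p (N+1)⌉} : Finset ℤ) := by
            rw [Finset.disjoint_left]
            intro z hz hz'
            have := hTle z hz
            simp only [Finset.mem_singleton] at hz'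
            omega
          rw [Finset.card_union_of_disjoint hdisj, Finset.card_singleton]
          push_cast
          rw [Finset.sum_range_succ]
          have := hw1 N
          rw [h2]
          linarith
      · have h2' : p (N+1) < (⌈p (N+1)⌉ : ℝ) := lt_of_le_of_ne hle2 (Ne.symm h2)
        refine ⟨T ∪ {⌈p (N+1)⌉ - 1, ⌈p (N+1)⌉}, ?_, ?_, ?_⟩
        · intro z hz
          rcases Finset.mem_union.1 hz with hz | hz
          · obtain ⟨k, hk, h⟩ := hTmem z hz; exact ⟨k, by omega, h⟩
          · simp only [Finset.mem_insert, Finset.mem_singleton] at hz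
            rcases hz with rfl | rfl
            · exact ⟨N+1, le_refl _, by rw [abs_lt]; push_cast; constructor <;> linarith⟩
            · exact ⟨N+1, le_refl _, by rw [abs_lt]; constructor <;> linarith⟩
        · intro z hz
          rcases Finset.mem_union.1 hz with hz | hz
          · exact le_trans (hTle z hz) hcc'
          · simp only [Finset.mem_insert, Finset.mem_singleton] at hz; omega
        · have hdisj : Disjoint T ({⌈p (N+1)⌉ - 1, ⌈p (N+1)⌉} : Finset ℤ) := by
            rw [Finset.disjoint_left]
            intro z hz hz'
            have := hTle z hz
            simp only [Finset.mem_insert, Finset.mem_singleton] at hz'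
            omega
          have hcard : ({⌈p (N+1)⌉ - 1, ⌈p (N+1)⌉} : Finset ℤ).card = 2 := by
            rw [Finset.card_insert_of_notMem (by simp), Finset.card_singleton]
          rw [Finset.card_union_of_disjoint hdisj, hcard]
          push_cast
          rw [Finset.sum_range_succ]
          have := hw1 N
          linarith

lemma key (lam : ℝ) (_hlam : lam ∈ Set.Ioo (0:ℝ) 1) (K L : Set ℝ)
    (hKb : Bornology.IsBounded K) (hLb : Bornology.IsBounded L)
    (N : ℕ) (α β : ℕ → ℝ) (w : ℕ → ℝ)
    (hα : ∀ k, α k ∈ K) (hβ : ∀ k, β k ∈ L)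
    (hw0 : ∀ k, 0 ≤ w k) (hw1 : ∀ k, w k ≤ 1)
    (hstep : ∀ k < N, w k ≤ ((1-lam) * α (k+1) + lam * β (k+1)) - ((1-lam) * α k + lam * β k)) :
    (∑ k ∈ Finset.range N, w k) + 1 ≤
      (latticeEnum1 ((1 - lam) • K + lam • L + Set.Ioo (-1 : ℝ) 1) : ℝ) := by
  set S := (1 - lam) • K + lam • L + Set.Ioo (-1 : ℝ) 1 with hSdef
  obtain ⟨T, hTmem, hTle, hTcard⟩ := core (fun k => (1-lam) * α k + lam * β k) w hw0 hw1 N hstep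
  have hTS : ∀ z ∈ T, (z:ℝ) ∈ S := by
    intro z hz
    obtain ⟨k, _, habs⟩ := hTmem z hz
    rw [abs_lt] at habs
    have h1 : (1-lam) * α k ∈ (1-lam) • K := by
      rw [← smul_eq_mul]; exact Set.smul_mem_smul_set (hα k)
    have h2 : lam * β k ∈ lam • L := by
      rw [← smul_eq_mul]; exact Set.smul_mem_smul_set (hβ k)
    have h3 : ((z:ℝ) - ((1-lam) * α k + lam * β k)) ∈ Set.Ioo (-1:ℝ) 1 :=
      ⟨by linarith [habs.1], by linarith [habs.2]⟩
    have h4 := Set.add_mem_add (Set.add_mem_add h1 h2) h3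
    have h5 : (1-lam) * α k + lam * β k + ((z:ℝ) - ((1-lam) * α k + lam * β k)) = (z:ℝ) := by ring
    rwa [h5] at h4
  have hSb : Bornology.IsBounded S :=
    ((hKb.smul₀ _).add (hLb.smul₀ _)).add (Metric.isBounded_Ioo _ _)
  have hfin := finite_int S hSb
  have hsub : ↑T ⊆ {z : ℤ | (z:ℝ) ∈ S} := fun z hz => hTS z hz
  have hcard : T.card ≤ latticeEnum1 S := by
    rw [latticeEnum1_eq]
    calc T.card = (↑T : Set ℤ).ncard := (Set.ncard_coe_finset T).symm
    _ ≤ _ := Set.ncard_le_ncard hsub hfin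
  have hce := Int.le_ceil ((1-lam) * α N + lam * β N)
  have hcast : (T.card : ℝ) ≤ (latticeEnum1 S : ℝ) := by exact_mod_cast hcard
  linarith

theorem stmt4 (lam : ℝ) (hlam : lam ∈ Set.Ioo (0 : ℝ) 1)
    (K L : Set ℝ) (hK : K.Nonempty) (hL : L.Nonempty)
    (hKb : Bornology.IsBounded K) (hLb : Bornology.IsBounded L) :
    (latticeEnum1 ((1 - lam) • K + lam • L + Set.Ioo (-1 : ℝ) 1) : ℝ) ≥
      (1 - lam) * (latticeEnum1 K : ℝ) + lam * (latticeEnum1 L : ℝ) := by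
  obtain ⟨hl0, hl1⟩ := hlam
  have hAfin : {z : ℤ | (z:ℝ) ∈ K}.Finite := finite_int K hKb
  have hBfin : {z : ℤ | (z:ℝ) ∈ L}.Finite := finite_int L hLb
  set m := hAfin.toFinset.card with hmdef
  set n := hBfin.toFinset.card with hndef
  have hmK : latticeEnum1 K = m := by
    rw [latticeEnum1_eq, hmdef, Set.ncard_eq_toFinset_card _ hAfin]
  have hnL : latticeEnum1 L = n := by
    rw [latticeEnum1_eq, hndef, Set.ncard_eq_toFinset_card _ hBfin]
  rw [ge_iff_le, hmK, hnL]
  have hw0' : (0:ℝ) ≤ 1 - lam := by linarith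
  rcases Nat.eq_zero_or_pos m with hm | hm
  · rcases Nat.eq_zero_or_pos n with hn | hn
    · rw [hm, hn]
      simp only [Nat.cast_zero, mul_zero, add_zero]
      positivity
    · -- m = 0, n ≥ 1 : use a point of K and the enumeration of L
      obtain ⟨q, hq⟩ := hK
      obtain ⟨b, hbS, hbstep, _⟩ := enum_exists hBfin.toFinset n rfl hn
      have hbL : ∀ k, ((b k : ℝ)) ∈ L := by
        intro k
        have := hbS k
        rwa [Set.Finite.mem_toFinset] at this
      have hkey := key lam ⟨hl0, hl1⟩ K L hKb hLb (n-1)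
        (fun _ => q) (fun k => (b k : ℝ)) (fun _ => lam)
        (fun _ => hq) hbL (fun _ => hl0.le) (fun _ => hl1.le) ?_
      · rw [Finset.sum_const, Finset.card_range, nsmul_eq_mul] at hkey
        have hn1 : ((n-1:ℕ):ℝ) = (n:ℝ) - 1 := by
          rw [Nat.cast_sub hn]; norm_num
        rw [hn1] at hkey
        rw [hm]
        push_cast
        nlinarith [hkey]
      · intro k hk
        have h1 : (b k : ℝ) + 1 ≤ (b (k+1) : ℝ) := by
          exact_mod_cast hbstep k (by omega)
        have h2 := mul_nonneg hl0.le (by linarith : (0:ℝ) ≤ (b (k+1):ℝ) - (b k:ℝ) - 1)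
        nlinarith [h2]
  · obtain ⟨a, haS, hastep, haconst⟩ := enum_exists hAfin.toFinset m rfl hm
    have haK : ∀ k, ((a k : ℝ)) ∈ K := by
      intro k
      have := haS k
      rwa [Set.Finite.mem_toFinset] at this
    rcases Nat.eq_zero_or_pos n with hn | hn
    · -- m ≥ 1, n = 0 : use enumeration of K and a point of L
      obtain ⟨q, hq⟩ := hL
      have hkey := key lam ⟨hl0, hl1⟩ K L hKb hLb (m-1)
        (fun k => (a k : ℝ)) (fun _ => q) (fun _ => 1 - lam)
        haK (fun _ => hq) (fun _ => hw0')
        (fun _ => by show (1:ℝ) - lam ≤ 1; linarith) ?_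
      · rw [Finset.sum_const, Finset.card_range, nsmul_eq_mul] at hkey
        have hm1 : ((m-1:ℕ):ℝ) = (m:ℝ) - 1 := by
          rw [Nat.cast_sub hm]; norm_num
        rw [hm1] at hkey
        rw [hn]
        push_cast
        nlinarith [hkey]
      · intro k hk
        show (1:ℝ) - lam ≤ ((1-lam) * ((a (k+1):ℝ)) + lam * q) - ((1-lam) * ((a k:ℝ)) + lam * q)
        have h1 : (a k : ℝ) + 1 ≤ (a (k+1) : ℝ) := by
          exact_mod_cast hastep k (by omega)
        have h2 := mul_nonneg hw0' (by linarith : (0:ℝ) ≤ (a (k+1):ℝ) - (a k:ℝ) - 1)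
        nlinarith [h2]
    · -- main case m ≥ 1, n ≥ 1
      obtain ⟨b, hbS, hbstep, _⟩ := enum_exists hBfin.toFinset n rfl hn
      have hbL : ∀ k, ((b k : ℝ)) ∈ L := by
        intro k
        have := hbS k
        rwa [Set.Finite.mem_toFinset] at this
      have hkey := key lam ⟨hl0, hl1⟩ K L hKb hLb ((m-1)+(n-1))
        (fun k => (a k : ℝ)) (fun k => (b (k - (m-1)) : ℝ))
        (fun k => if k < m-1 then 1 - lam else lam)
        haK (fun k => hbL _)
        (fun k => by split <;> linarith)
        (fun k => by split <;> linarith) ?_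
      · have e1 : ∑ k ∈ Finset.Ico 0 (m-1), (if k < m-1 then 1 - lam else lam)
            = ((m-1:ℕ):ℝ) * (1-lam) := by
          rw [Finset.sum_congr rfl (fun k hk => if_pos (Finset.mem_Ico.mp hk).2),
            Finset.sum_const, Nat.card_Ico, nsmul_eq_mul, Nat.sub_zero]
        have e2 : ∑ k ∈ Finset.Ico (m-1) ((m-1)+(n-1)), (if k < m-1 then 1 - lam else lam)
            = ((n-1:ℕ):ℝ) * lam := by
          rw [Finset.sum_congr rfl
            (fun k hk => if_neg (by have := (Finset.mem_Ico.mp hk).1; omega)),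
            Finset.sum_const, Nat.card_Ico, nsmul_eq_mul]
          congr 2
          omega
        rw [Finset.range_eq_Ico,
          ← Finset.sum_Ico_consecutive _ (Nat.zero_le (m-1)) (Nat.le_add_right (m-1) (n-1)),
          e1, e2] at hkey
        have hm1 : ((m-1:ℕ):ℝ) = (m:ℝ) - 1 := by rw [Nat.cast_sub hm]; norm_num
        have hn1 : ((n-1:ℕ):ℝ) = (n:ℝ) - 1 := by rw [Nat.cast_sub hn]; norm_num
        rw [hm1, hn1] at hkey
        nlinarith [hkey]
      · intro k hk
        by_cases hkm : k < m - 1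
        · rw [if_pos hkm]
          have h1 : (a k : ℝ) + 1 ≤ (a (k+1) : ℝ) := by
            exact_mod_cast hastep k (by omega)
          have h2 : (k+1) - (m-1) = k - (m-1) := by omega
          rw [h2]
          have h3 := mul_nonneg hw0' (by linarith : (0:ℝ) ≤ (a (k+1):ℝ) - (a k:ℝ) - 1)
          nlinarith [h3]
        · rw [if_neg hkm]
          have hak : a (k+1) = a k := by
            rw [haconst k (by omega), haconst (k+1) (by omega)]
          have h2 : (k+1) - (m-1) = (k - (m-1)) + 1 := by omega
          rw [h2, hak]
          have h1 : (b (k-(m-1)) : ℝ) + 1 ≤ (b (k-(m-1)+1) : ℝ) := by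
            exact_mod_cast hbstep _ (by omega)
          have h3 := mul_nonneg hl0.le
            (by linarith : (0:ℝ) ≤ (b (k-(m-1)+1):ℝ) - (b (k-(m-1)):ℝ) - 1)
          nlinarith [h3]
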